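/- Every complete structured DNNF D of width k computing a Boolean function f satisfies width(D) ≥ 2^{cc_best^{1/3}(f)}, where cc_best^{1/3}(f) is the minimum over all partitions (Y,Z) of the variables with min(|Y|,|Z|) ≥ |X|/3 of cc(f,(Y,Z)). -/

import Mathlib

/-- A complete structured DNNF together with its v-tree (see the paper):
literal gates at the leaves, ∨-gates given by lists of ∧-gates (pairs of
child-gate indices) at internal nodes. -/
inductive SDNNF (V : Type) : Type
  | leaf (x : V) (gs : List Bool) : SDNNF V
  | node (l r : SDNNF V) (gs : List (List (ℕ × ℕ))) : SDNNF V

namespace SDNNF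

/-- The leaf labels of the underlying v-tree, i.e. the variables. -/
def leaves {V : Type} : SDNNF V → List V
  | .leaf x _ => [x]
  | .node l r _ => l.leaves ++ r.leaves

/-- The width: the maximal number of gates in any block μ(t). -/
def width {V : Type} : SDNNF V → ℕ
  | .leaf _ gs => gs.length
  | .node l r gs => max gs.length (max l.width r.width)

/-- Every block is nonempty (in particular the circuit has an output gate). -/
def Proper {V : Type} : SDNNF V → Prop
  | .leaf _ gs => gs ≠ []
  | .node l r gs => gs ≠ [] ∧ l.Proper ∧ r.Proper

/-- Satisfaction of the `i`-th gate of the top block under an assignment. -/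
def gateSat {V : Type} : SDNNF V → (V → Bool) → ℕ → Prop
  | .leaf x gs, a, i => ∃ b, gs[i]? = some b ∧ a x = b
  | .node l r gs, a, i =>
      ∃ c, gs[i]? = some c ∧ ∃ p ∈ c, l.gateSat a p.1 ∧ r.gateSat a p.2

variable {V : Type}

def subAt : SDNNF V → List Bool → Option (SDNNF V)
  | t, [] => some t
  | .leaf _ _, _ :: _ => none
  | .node l _ _, false :: p => subAt l p
  | .node _ r _, true :: p => subAt r p

def topLen : SDNNF V → ℕ
  | .leaf _ gs => gs.length
  | .node _ _ gs => gs.length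

def satVia : SDNNF V → List Bool → (V → Bool) → ℕ → ℕ → Prop
  | t, [], a, g, i => i = g ∧ t.gateSat a g
  | .leaf _ _, _ :: _, _, _, _ => False
  | .node l r gs, false :: p, a, g, i =>
      ∃ c, gs[g]? = some c ∧ ∃ pr ∈ c, satVia l p a pr.1 i ∧ r.gateSat a pr.2
  | .node l r gs, true :: p, a, g, i =>
      ∃ c, gs[g]? = some c ∧ ∃ pr ∈ c, l.gateSat a pr.1 ∧ satVia r p a pr.2 i

@[simp] lemma subAt_nil (t : SDNNF V) : subAt t [] = some t := by cases t <;> rfl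

@[simp] lemma satVia_nil (t : SDNNF V) (a : V → Bool) (g i : ℕ) :
    satVia t [] a g i ↔ i = g ∧ t.gateSat a g := by cases t <;> rfl

lemma leaves_ne_nil : ∀ t : SDNNF V, t.leaves ≠ []
  | .leaf x gs => by simp [leaves]
  | .node l r gs => by simp [leaves]; intro h _; exact leaves_ne_nil l h

lemma topLen_le_width : ∀ t : SDNNF V, t.topLen ≤ t.width
  | .leaf _ _ => le_rfl
  | .node _ _ _ => le_max_left _ _

lemma one_le_width : ∀ t : SDNNF V, t.Proper → 1 ≤ t.width
  | .leaf x gs, h => by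
      simpa [width, Proper, Nat.one_le_iff_ne_zero] using h
  | .node l r gs, h => by
      have : gs ≠ [] := h.1
      have : 1 ≤ gs.length := by simpa [Nat.one_le_iff_ne_zero] using this
      exact le_trans this (le_max_left _ _)

lemma gateSat_lt_topLen : ∀ t : SDNNF V, ∀ a g, t.gateSat a g → g < t.topLen
  | .leaf x gs, a, g, ⟨b, hb, _⟩ => by
      simpa [topLen] using (List.getElem?_eq_some_iff.1 hb).1
  | .node l r gs, a, g, ⟨c, hc, _⟩ => by
      simpa [topLen] using (List.getElem?_eq_some_iff.1 hc).1

lemma gateSat_congr : ∀ t : SDNNF V, ∀ a b g, (∀ v ∈ t.leaves, a v = b v) →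
    (t.gateSat a g ↔ t.gateSat b g)
  | .leaf x gs, a, b, g, h => by
      have : a x = b x := h x (by simp [leaves])
      simp [gateSat, this]
  | .node l r gs, a, b, g, h => by
      constructor <;>
        rintro ⟨c, hc, pr, hpr, h1, h2⟩ <;>
        refine ⟨c, hc, pr, hpr, ?_, ?_⟩
      · exact (gateSat_congr l a b pr.1 (fun v hv => h v (by simp [leaves, hv]))).1 h1
      · exact (gateSat_congr r a b pr.2 (fun v hv => h v (by simp [leaves, hv]))).1 h2
      · exact (gateSat_congr l a b pr.1 (fun v hv => h v (by simp [leaves, hv]))).2 h1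
      · exact (gateSat_congr r a b pr.2 (fun v hv => h v (by simp [leaves, hv]))).2 h2

lemma satVia_gateSat : ∀ t : SDNNF V, ∀ p a g i, satVia t p a g i → t.gateSat a g
  | t, [], a, g, i, h => ((satVia_nil t a g i).1 h).2
  | .leaf _ _, _ :: _, _, _, _, h => h.elim
  | .node l r gs, false :: p, a, g, i, ⟨c, hc, pr, hpr, h1, h2⟩ =>
      ⟨c, hc, pr, hpr, satVia_gateSat l p a pr.1 i h1, h2⟩
  | .node l r gs, true :: p, a, g, i, ⟨c, hc, pr, hpr, h1, h2⟩ =>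
      ⟨c, hc, pr, hpr, h1, satVia_gateSat r p a pr.2 i h2⟩

lemma gateSat_exists_via : ∀ t : SDNNF V, ∀ p s a g, subAt t p = some s →
    t.gateSat a g → ∃ i, satVia t p a g i ∧ s.gateSat a i
  | t, [], s, a, g, hs, h => by
      obtain rfl : t = s := by simpa using hs
      exact ⟨g, (satVia_nil t a g g).2 ⟨rfl, h⟩, h⟩
  | .leaf _ _, _ :: _, s, a, g, hs, h => by simp [subAt] at hs
  | .node l r gs, false :: p, s, a, g, hs, ⟨c, hc, pr, hpr, h1, h2⟩ => by
      obtain ⟨i, hi, hi2⟩ := gateSat_exists_via l p s a pr.1 hs h1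
      exact ⟨i, ⟨c, hc, pr, hpr, hi, h2⟩, hi2⟩
  | .node l r gs, true :: p, s, a, g, hs, ⟨c, hc, pr, hpr, h1, h2⟩ => by
      obtain ⟨i, hi, hi2⟩ := gateSat_exists_via r p s a pr.2 hs h2
      exact ⟨i, ⟨c, hc, pr, hpr, h1, hi⟩, hi2⟩

lemma subAt_leaves_sublist : ∀ t : SDNNF V, ∀ p s, subAt t p = some s →
    s.leaves.Sublist t.leaves
  | t, [], s, hs => by
      obtain rfl : t = s := by simpa using hs
      exact List.Sublist.refl _
  | .leaf _ _, _ :: _, s, hs => by simp [subAt] at hs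
  | .node l r gs, false :: p, s, hs =>
      ((subAt_leaves_sublist l p s hs).trans (List.sublist_append_left _ _))
  | .node l r gs, true :: p, s, hs =>
      ((subAt_leaves_sublist r p s hs).trans (List.sublist_append_right _ _))

lemma subAt_width_le : ∀ t : SDNNF V, ∀ p s, subAt t p = some s →
    s.width ≤ t.width
  | t, [], s, hs => by
      obtain rfl : t = s := by simpa using hs
      exact le_rfl
  | .leaf _ _, _ :: _, s, hs => by simp [subAt] at hs
  | .node l r gs, false :: p, s, hs =>
      (subAt_width_le l p s hs).trans (le_max_of_le_right (le_max_left _ _))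
  | .node l r gs, true :: p, s, hs =>
      (subAt_width_le r p s hs).trans (le_max_of_le_right (le_max_right _ _))

lemma satVia_subst : ∀ t : SDNNF V, ∀ p s a b g i, subAt t p = some s →
    t.leaves.Nodup → satVia t p b g i → s.gateSat a i →
    (∀ v, v ∉ s.leaves → a v = b v) → satVia t p a g i
  | t, [], s, a, b, g, i, hs, hnd, hv, hsat, hag => by
      obtain rfl : t = s := by simpa using hs
      obtain ⟨h1, h2⟩ := (satVia_nil t b g i).1 hv
      exact (satVia_nil t a g i).2 ⟨h1, h1 ▸ hsat⟩
  | .leaf _ _, _ :: _, s, a, b, g, i, hs, hnd, hv, hsat, hag => by simp [subAt] at hs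
  | .node l r gs, false :: p, s, a, b, g, i, hs, hnd, ⟨c, hc, pr, hpr, h1, h2⟩, hsat, hag => by
      have hnd' : (l.leaves ++ r.leaves).Nodup := hnd
      have hdisj : l.leaves.Disjoint r.leaves := List.disjoint_of_nodup_append hnd'
      have hsubl := (subAt_leaves_sublist l p s hs).subset
      refine ⟨c, hc, pr, hpr, satVia_subst l p s a b pr.1 i hs hnd'.of_append_left h1 hsat hag, ?_⟩
      refine (gateSat_congr r a b pr.2 (fun v hv => ?_)).2 h2
      exact hag v (fun hv' => hdisj (hsubl hv') hv)
  | .node l r gs, true :: p, s, a, b, g, i, hs, hnd, ⟨c, hc, pr, hpr, h1, h2⟩, hsat, hag => by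
      have hnd' : (l.leaves ++ r.leaves).Nodup := hnd
      have hdisj : l.leaves.Disjoint r.leaves := List.disjoint_of_nodup_append hnd'
      have hsubl := (subAt_leaves_sublist r p s hs).subset
      refine ⟨c, hc, pr, hpr, ?_, satVia_subst r p s a b pr.2 i hs hnd'.of_append_right h2 hsat hag⟩
      refine (gateSat_congr l a b pr.1 (fun v hv => ?_)).2 h1
      exact hag v (fun hv' => hdisj hv (hsubl hv'))

lemma balanced (n : ℕ) (hn : 2 ≤ n) : ∀ t : SDNNF V,
    2 * n < 3 * t.leaves.length → t.leaves.length ≤ n →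
    ∃ p s, subAt t p = some s ∧ n ≤ 3 * s.leaves.length ∧ 3 * s.leaves.length ≤ 2 * n
  | .leaf x gs, h1, h2 => by simp [leaves] at h1; omega
  | .node l r gs, h1, h2 => by
      have hL : (SDNNF.node l r gs).leaves.length = l.leaves.length + r.leaves.length := by
        simp [leaves]
      by_cases hl : 2 * n < 3 * l.leaves.length
      · obtain ⟨p, s, hp, h3, h4⟩ := balanced n hn l hl (by omega)
        exact ⟨false :: p, s, hp, h3, h4⟩
      · by_cases hr : 2 * n < 3 * r.leaves.length
        · obtain ⟨p, s, hp, h3, h4⟩ := balanced n hn r hr (by omega)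
          exact ⟨true :: p, s, hp, h3, h4⟩
        · by_cases hl2 : n ≤ 3 * l.leaves.length
          · exact ⟨[false], l, by simp [subAt], hl2, by omega⟩
          · exact ⟨[true], r, by simp [subAt], by omega, by omega⟩


end SDNNF

/-- A predicate on assignments depends only on the variables in `S`. -/
def PredDependsOn {V : Type} (r : (V → Bool) → Prop) (S : Set V) : Prop :=
  ∀ a b : V → Bool, (∀ v ∈ S, a v = b v) → (r a ↔ r b)

/-- The minimum size of a rectangle cover of `f` respecting the partition
`(Y, Yᶜ)`. -/
noncomputable def minCoverSize {V : Type} (f : (V → Bool) → Prop)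
    (Y : Set V) : ℕ :=
  sInf {s | ∃ r1 r2 : Fin s → (V → Bool) → Prop,
    (∀ i, PredDependsOn (r1 i) Y ∧ PredDependsOn (r2 i) Yᶜ) ∧
    ∀ a, f a ↔ ∃ i, r1 i a ∧ r2 i a}

/-- The best-case non-deterministic communication complexity with
1/3-balance: the minimum over all partitions `(Y, Yᶜ)` with
`min(|Y|,|Yᶜ|) ≥ |V|/3` of `log₂` of the minimum rectangle cover size. -/
noncomputable def ccBest {V : Type} [Fintype V] [DecidableEq V]
    (f : (V → Bool) → Prop) : ℕ :=
  sInf {m | ∃ Y : Finset V,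
    Fintype.card V ≤ 3 * Y.card ∧
    Fintype.card V ≤ 3 * (Fintype.card V - Y.card) ∧
    m = Nat.log 2 (minCoverSize f ↑Y)}

/-- Every complete structured DNNF `D` computing `f` has width at least
`2^{cc_best^{1/3}(f)}`. -/
theorem stmt13 {V : Type} [Fintype V] [DecidableEq V]
    (D : SDNNF V) (f : (V → Bool) → Prop)
    (hnodup : D.leaves.Nodup) (hall : ∀ x : V, x ∈ D.leaves)
    (hproper : D.Proper)
    (hcomp : ∀ a, f a ↔ D.gateSat a 0) :
    2 ^ ccBest f ≤ D.width := by
  have hwid : 1 ≤ D.width := SDNNF.one_le_width D hproper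
  have hlen : D.leaves.length = Fintype.card V := by
    have huniv : D.leaves.toFinset = Finset.univ :=
      Finset.eq_univ_iff_forall.2 (fun x => List.mem_toFinset.2 (hall x))
    calc D.leaves.length = D.leaves.toFinset.card :=
          (List.toFinset_card_of_nodup hnodup).symm
      _ = Fintype.card V := by rw [huniv, Finset.card_univ]
  have hpos : 1 ≤ Fintype.card V := by
    rw [← hlen]
    exact List.length_pos_iff.2 (SDNNF.leaves_ne_nil D)
  by_cases h2 : 2 ≤ Fintype.card V
  · -- find a balanced subtree
    obtain ⟨p, s0, hsub, hbl, hbr⟩ :=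
      SDNNF.balanced (Fintype.card V) h2 D (by omega) (by omega)
    have hs0nd : s0.leaves.Nodup :=
      (SDNNF.subAt_leaves_sublist D p s0 hsub).nodup hnodup
    have hs0le : s0.leaves.length ≤ Fintype.card V := by
      rw [← hlen]; exact (SDNNF.subAt_leaves_sublist D p s0 hsub).length_le
    set Y : Finset V := s0.leaves.toFinset with hY
    have hYcard : Y.card = s0.leaves.length := List.toFinset_card_of_nodup hs0nd
    have hmemY : ∀ v : V, v ∈ (↑Y : Set V) ↔ v ∈ s0.leaves := by
      intro v; simp [hY]
    -- the rectangle cover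
    have hcov : minCoverSize f ↑Y ≤ s0.topLen := by
      apply Nat.sInf_le
      refine ⟨fun i a => s0.gateSat a i.1,
        fun i a => ∃ b : V → Bool, (∀ v, v ∉ s0.leaves → b v = a v) ∧
          s0.gateSat b i.1 ∧ SDNNF.satVia D p b 0 i.1, fun i => ⟨?_, ?_⟩, ?_⟩
      · intro a b hab
        exact SDNNF.gateSat_congr s0 a b i.1 (fun v hv => hab v ((hmemY v).2 hv))
      · intro a b hab
        have hab' : ∀ v, v ∉ s0.leaves → a v = b v := by
          intro v hv
          exact hab v (by simpa [hmemY] using hv)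
        constructor
        · rintro ⟨c, hc1, hc2, hc3⟩
          exact ⟨c, fun v hv => (hc1 v hv).trans (hab' v hv), hc2, hc3⟩
        · rintro ⟨c, hc1, hc2, hc3⟩
          exact ⟨c, fun v hv => (hc1 v hv).trans (hab' v hv).symm, hc2, hc3⟩
      · intro a
        constructor
        · intro hfa
          obtain ⟨i, hvia, hsat⟩ :=
            SDNNF.gateSat_exists_via D p s0 a 0 hsub ((hcomp a).1 hfa)
          exact ⟨⟨i, SDNNF.gateSat_lt_topLen s0 a i hsat⟩, hsat,
            a, fun _ _ => rfl, hsat, hvia⟩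
        · rintro ⟨i, h1, b, hb1, hb2, hb3⟩
          refine (hcomp a).2 (SDNNF.satVia_gateSat D p a 0 i.1 ?_)
          exact SDNNF.satVia_subst D p s0 a b 0 i.1 hsub hnodup hb3 h1
            (fun v hv => (hb1 v hv).symm)
    have hcc : ccBest f ≤ Nat.log 2 (minCoverSize f ↑Y) := by
      apply Nat.sInf_le
      exact ⟨Y, by omega, by omega, rfl⟩
    have h1 : 2 ^ ccBest f ≤ 2 ^ Nat.log 2 (minCoverSize f ↑Y) :=
      Nat.pow_le_pow_right (by norm_num) hcc
    by_cases hm0 : minCoverSize f ↑Y = 0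
    · simpa [hm0] using h1.trans (by simp [hm0, hwid])
    · refine h1.trans ((Nat.pow_log_le_self 2 hm0).trans (hcov.trans ?_))
      exact (SDNNF.topLen_le_width s0).trans (SDNNF.subAt_width_le D p s0 hsub)
  · -- Fintype.card V = 1 : the set in ccBest is empty
    have hcard : Fintype.card V = 1 := by omega
    have hempty : {m | ∃ Y : Finset V,
        Fintype.card V ≤ 3 * Y.card ∧
        Fintype.card V ≤ 3 * (Fintype.card V - Y.card) ∧
        m = Nat.log 2 (minCoverSize f ↑Y)} = ∅ := by
      ext m
      simp only [Set.mem_setOf_eq, Set.mem_empty_iff_false, iff_false]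
      rintro ⟨Y, hY1, hY2, _⟩
      have : Y.card ≤ Fintype.card V := by
        simpa using Finset.card_le_card (Finset.subset_univ Y)
      omega
    have : ccBest f = 0 := by rw [ccBest, hempty, Nat.sInf_empty]
    simpa [this] using hwid
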